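/- Let $f(t) = \int_0^\infty e^{-st^2}\,\sigma(ds)$ where $\sigma$ is a probability measure on $[0,\infty)$ with the doubling property: there is $\kappa>0$ with $\sigma([2u,2v]) \le \kappa\,\sigma([u,v])$ for all $0\le u\le v$. Then for any $\xi,\eta\in\mathbb{R}^n$ there is a constant $C=C(f,\xi,\eta)>0$ such that $f(|x-\xi|) \le C f(|x-\eta|)$ for all $x\in\mathbb{R}^n$. -/

import Mathlib

open Set MeasureTheory NNReal ENNReal

/-- For `f(t) = ∫_0^∞ e^{-st²} σ(ds)` with `σ` a probability measure on `[0,∞)` having the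
doubling property `σ([2u,2v]) ≤ κ σ([u,v])`, and any `ξ, η ∈ ℝⁿ`, there is `C > 0` such that
`f(|x-ξ|) ≤ C f(|x-η|)` for all `x ∈ ℝⁿ`. -/
theorem gaussian_mixture_shift_comparison (n : ℕ) (σ : Measure ℝ) [IsProbabilityMeasure σ]
    (hσsupp : σ (Set.Iio 0) = 0)
    (κ : ℝ≥0) (hκ : 0 < κ)
    (hdoubling : ∀ u v : ℝ, 0 ≤ u → u ≤ v →
      σ (Set.Icc (2 * u) (2 * v)) ≤ κ * σ (Set.Icc u v))
    (f : ℝ → ℝ) (hf : ∀ t : ℝ, 0 ≤ t → f t = ∫ s, Real.exp (-(s * t ^ 2)) ∂σ)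
    (ξ η : EuclideanSpace ℝ (Fin n)) :
    ∃ C : ℝ, 0 < C ∧ ∀ x : EuclideanSpace ℝ (Fin n),
      f (dist x ξ) ≤ C * f (dist x η) := by
  have hae : ∀ᵐ s ∂σ, 0 ≤ s := by
    rw [ae_iff]
    convert hσsupp using 2
    ext s; simp [Set.mem_Iio, not_le]
  have hmble : ∀ t : ℝ, AEStronglyMeasurable (fun s => Real.exp (-(s * t ^ 2))) σ := by
    intro t
    exact (Real.continuous_exp.comp (continuous_id.mul continuous_const).neg).aestronglyMeasurable
  have hint : ∀ t : ℝ, Integrable (fun s => Real.exp (-(s * t ^ 2))) σ := by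
    intro t
    refine (integrable_const (1 : ℝ)).mono' (hmble t) (hae.mono fun s hs => ?_)
    rw [Real.norm_eq_abs, abs_of_pos (Real.exp_pos _)]
    exact Real.exp_le_one_iff.mpr (by nlinarith [sq_nonneg t])
  have hf_le_one : ∀ t : ℝ, 0 ≤ t → f t ≤ 1 := by
    intro t ht
    rw [hf t ht]
    calc ∫ s, Real.exp (-(s * t ^ 2)) ∂σ ≤ ∫ _, (1 : ℝ) ∂σ := by
          refine integral_mono_ae (hint t) (integrable_const 1) (hae.mono fun s hs => ?_)
          exact Real.exp_le_one_iff.mpr (by nlinarith [sq_nonneg t])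
      _ = 1 := by simp
  have hf_pos : ∀ t : ℝ, 0 ≤ t → 0 < f t := by
    intro t ht
    rw [hf t ht]
    refine (integral_pos_iff_support_of_nonneg_ae
      (ae_of_all _ fun s => (Real.exp_pos _).le) (hint t)).mpr ?_
    have : (Function.support fun s => Real.exp (-(s * t ^ 2))) = Set.univ := by
      ext s; simp [Function.mem_support, (Real.exp_pos _).ne']
    rw [this]
    simp
  have hf_anti : ∀ t₁ t₂ : ℝ, 0 ≤ t₁ → t₁ ≤ t₂ → f t₂ ≤ f t₁ := by
    intro t₁ t₂ h1 h12
    rw [hf t₁ h1, hf t₂ (h1.trans h12)]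
    refine integral_mono_ae (hint t₂) (hint t₁) (hae.mono fun s hs => ?_)
    refine Real.exp_le_exp.mpr ?_
    have : t₁ ^ 2 ≤ t₂ ^ 2 := by nlinarith
    nlinarith [mul_le_mul_of_nonneg_left this hs]
  -- the measure-level doubling consequence on half-lines
  have hIio : ∀ a : ℝ, σ (Set.Iio a) ≤ (κ : ℝ≥0∞) ^ 3 * σ (Set.Iio (a / 4)) := by
    intro a
    rcases le_or_gt a 0 with ha | ha
    · have : σ (Set.Iio a) = 0 :=
        le_antisymm (le_trans (measure_mono (Set.Iio_subset_Iio ha)) hσsupp.le) zero_le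
      simp [this]
    · have h1 : σ (Set.Iio a) ≤ σ (Set.Icc 0 a) := by
        have hsub : Set.Iio a ⊆ Set.Iio 0 ∪ Set.Icc 0 a := by
          intro s hs
          rcases lt_or_ge s 0 with h | h
          · exact Or.inl h
          · exact Or.inr ⟨h, (Set.mem_Iio.mp hs).le⟩
        calc σ (Set.Iio a) ≤ σ (Set.Iio 0 ∪ Set.Icc 0 a) := measure_mono hsub
          _ ≤ σ (Set.Iio 0) + σ (Set.Icc 0 a) := measure_union_le _ _
          _ = σ (Set.Icc 0 a) := by rw [hσsupp, zero_add]
      have hd : ∀ b : ℝ, 0 ≤ b → σ (Set.Icc 0 b) ≤ κ * σ (Set.Icc 0 (b / 2)) := by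
        intro b hb
        have := hdoubling 0 (b / 2) le_rfl (by linarith)
        simpa [mul_div_cancel₀] using this
      have h2 : σ (Set.Icc 0 a) ≤ (κ : ℝ≥0∞) ^ 3 * σ (Set.Icc 0 (a / 8)) := by
        calc σ (Set.Icc 0 a) ≤ κ * σ (Set.Icc 0 (a / 2)) := hd a ha.le
          _ ≤ κ * (κ * σ (Set.Icc 0 (a / 2 / 2))) :=
            mul_le_mul_right (hd (a / 2) (by linarith)) _
          _ ≤ κ * (κ * (κ * σ (Set.Icc 0 (a / 2 / 2 / 2)))) :=
            mul_le_mul_right (mul_le_mul_right (hd (a / 2 / 2) (by linarith)) _) _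
          _ = (κ : ℝ≥0∞) ^ 3 * σ (Set.Icc 0 (a / 8)) := by
            rw [show a / 2 / 2 / 2 = a / 8 by ring]; ring
      have h3 : σ (Set.Icc 0 (a / 8)) ≤ σ (Set.Iio (a / 4)) := by
        refine measure_mono fun s hs => ?_
        rcases hs with ⟨_, h⟩
        exact Set.mem_Iio.mpr (by linarith)
      calc σ (Set.Iio a) ≤ σ (Set.Icc 0 a) := h1
        _ ≤ (κ : ℝ≥0∞) ^ 3 * σ (Set.Icc 0 (a / 8)) := h2
        _ ≤ (κ : ℝ≥0∞) ^ 3 * σ (Set.Iio (a / 4)) := mul_le_mul_right h3 _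
  -- lintegral representation
  set L : ℝ → ℝ≥0∞ := fun t => ∫⁻ s, ENNReal.ofReal (Real.exp (-(s * t ^ 2))) ∂σ with hL
  have hfL : ∀ t : ℝ, 0 ≤ t → f t = (L t).toReal := by
    intro t ht
    rw [hf t ht, integral_eq_lintegral_of_nonneg_ae
      (ae_of_all _ fun s => (Real.exp_pos _).le) (hmble t)]
  have hLfin : ∀ t : ℝ, L t ≤ 1 := by
    intro t
    calc L t ≤ ∫⁻ _, 1 ∂σ := by
          refine lintegral_mono_ae (hae.mono fun s hs => ?_)
          exact ENNReal.ofReal_le_one.mpr (Real.exp_le_one_iff.mpr (by nlinarith [sq_nonneg t]))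
      _ = 1 := by simp
  have hlayer : ∀ t : ℝ, L t = ∫⁻ l in Set.Ioi (0 : ℝ), σ {s | l < Real.exp (-(s * t ^ 2))} := by
    intro t
    exact lintegral_eq_lintegral_meas_lt σ (ae_of_all _ fun s => (Real.exp_pos _).le)
      (hmble t).aemeasurable
  have hsetIio : ∀ t : ℝ, 0 < t → ∀ l : ℝ, 0 < l →
      {s : ℝ | l < Real.exp (-(s * t ^ 2))} = Set.Iio (-Real.log l / t ^ 2) := by
    intro t ht l hl
    ext s
    have ht2 : (0 : ℝ) < t ^ 2 := by positivity
    simp only [Set.mem_setOf_eq, Set.mem_Iio]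
    rw [← Real.log_lt_iff_lt_exp hl, lt_div_iff₀ ht2]
    constructor
    · intro h; linarith
    · intro h; linarith
  have key : ∀ t : ℝ, 0 < t → f t ≤ (κ : ℝ) ^ 3 * f (2 * t) := by
    intro t ht
    have h2t : (0 : ℝ) < 2 * t := by linarith
    have hLle : L t ≤ (κ : ℝ≥0∞) ^ 3 * L (2 * t) := by
      rw [hlayer t, hlayer (2 * t)]
      have : ∫⁻ l in Set.Ioi (0 : ℝ), σ {s | l < Real.exp (-(s * t ^ 2))}
          ≤ ∫⁻ l in Set.Ioi (0 : ℝ), (κ : ℝ≥0∞) ^ 3 * σ {s | l < Real.exp (-(s * (2 * t) ^ 2))} := by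
        refine setLIntegral_mono' measurableSet_Ioi fun l hl => ?_
        rw [hsetIio t ht l hl, hsetIio (2 * t) h2t l hl]
        have : -Real.log l / (2 * t) ^ 2 = (-Real.log l / t ^ 2) / 4 := by ring
        rw [this]
        exact hIio _
      refine this.trans ?_
      rw [lintegral_const_mul' _ _ (by simp : ((κ : ℝ≥0∞) ^ 3) ≠ ⊤)]
    have hfin : (κ : ℝ≥0∞) ^ 3 * L (2 * t) ≠ ⊤ :=
      ENNReal.mul_ne_top (by simp) (lt_of_le_of_lt (hLfin _) ENNReal.one_lt_top).ne
    rw [hfL t ht.le, hfL (2 * t) h2t.le]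
    calc (L t).toReal ≤ ((κ : ℝ≥0∞) ^ 3 * L (2 * t)).toReal := ENNReal.toReal_mono hfin hLle
      _ = (κ : ℝ) ^ 3 * (L (2 * t)).toReal := by
        rw [ENNReal.toReal_mul]
        simp
  -- assemble
  set d := dist ξ η with hd
  have hd0 : 0 ≤ d := dist_nonneg
  refine ⟨max ((κ : ℝ) ^ 3) (max 1 (f (2 * d))⁻¹), ?_, ?_⟩
  · exact lt_of_lt_of_le one_pos (le_trans (le_max_left _ _) (le_max_right _ _))
  intro x
  set a := dist x ξ with hadef
  set b := dist x η with hbdef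
  have ha0 : 0 ≤ a := dist_nonneg
  have hb0 : 0 ≤ b := dist_nonneg
  have hfb0 : 0 ≤ f b := (hf_pos b hb0).le
  set C := max ((κ : ℝ) ^ 3) (max 1 (f (2 * d))⁻¹) with hC
  rcases le_or_gt a b with hab | hab
  swap
  · -- a > b : f a ≤ f b ≤ C * f b
    have h1 : f a ≤ f b := hf_anti b a hb0 hab.le
    have hC1 : 1 ≤ C := le_trans (le_max_left _ _) (le_max_right _ _)
    nlinarith
  · rcases le_or_gt d a with hda | hda
    · -- d ≤ a : b ≤ a + d ≤ 2a
      rcases eq_or_lt_of_le ha0 with h | hapos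
      · -- a = 0 then b ≤ d ≤ a = 0 so b = 0
        have hb' : b ≤ d + a := by
          rw [hadef, hbdef, hd]
          calc dist x η ≤ dist x ξ + dist ξ η := dist_triangle x ξ η
            _ = dist ξ η + dist x ξ := by ring
        have : b = a := le_antisymm (by linarith) hab
        rw [this]
        have hC1 : 1 ≤ C := le_trans (le_max_left _ _) (le_max_right _ _)
        nlinarith [hf_pos a ha0]
      · have hb2a : b ≤ 2 * a := by
          have : b ≤ a + d := by
            rw [hadef, hbdef, hd]; exact dist_triangle x ξ η
          linarith
        have h1 : f a ≤ (κ : ℝ) ^ 3 * f (2 * a) := key a hapos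
        have h2 : f (2 * a) ≤ f b := hf_anti b (2 * a) hb0 hb2a
        have hCκ : (κ : ℝ) ^ 3 ≤ C := le_max_left _ _
        have hκ3 : (0 : ℝ) ≤ (κ : ℝ) ^ 3 := by positivity
        nlinarith
    · -- a < d : b ≤ a + d < 2d, f a ≤ 1 ≤ f(2d)⁻¹ * f b
      have hb2d : b ≤ 2 * d := by
        have : b ≤ a + d := by
          rw [hadef, hbdef, hd]; exact dist_triangle x ξ η
        linarith
      have hf2d : 0 < f (2 * d) := hf_pos (2 * d) (by linarith)
      have h2 : f (2 * d) ≤ f b := hf_anti b (2 * d) hb0 hb2d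
      have h1 : f a ≤ 1 := hf_le_one a ha0
      have hCi : (f (2 * d))⁻¹ ≤ C := le_trans (le_max_right _ _) (le_max_right _ _)
      have : (1 : ℝ) ≤ (f (2 * d))⁻¹ * f b := by
        rw [← mul_le_mul_iff_right₀ hf2d]
        field_simp
        nlinarith
      calc f a ≤ 1 := h1
        _ ≤ (f (2 * d))⁻¹ * f b := this
        _ ≤ C * f b := by nlinarith [inv_nonneg.mpr hf2d.le]
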